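/- arXiv:1005.3536 — 2 statements merged into one kernel-verified Lean document; each statement's English description precedes it below -/
import Mathlib

section
/- Let a, b ∈ ℂ with a ≠ 0 and a ≠ 1, and let f(z) = az + b, an affine bijection of ℂ with inverse f^{−1}(z) = z/a − b/a. Then for every z ∈ ℂ there exists a sequence of pairwise distinct integers (n_k) such that the iterates f^{∘n_k}(z) converge in ℂ. (Specifically: if |a| < 1 then f^{∘n}(z) → b/(1−a) as n → +∞; if |a| > 1 then f^{∘(−n)}(z) → b/(1−a) as n → +∞; and if |a| = 1 with a ≠ 1 then the orbit {f^{∘n}(z) : n ∈ ℤ} is bounded, so it has a convergent subsequence along distinct indices.) In particular the cyclic group generated by f does not act properly discontinuously on ℂ, so any affine transformation generating a discrete group action must have a = 1, i.e. be a translation. -/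
open Filter Topology

noncomputable section

/-- Let `f(z) = az + b` with `a ≠ 0`, `a ≠ 1`, viewed as a bijection of `ℂ` (an element of
the permutation group of `ℂ`, so that integer iterates `f^n`, `n ∈ ℤ`, make sense, with
`f⁻¹(z) = z/a − b/a`).  Then for every `z ∈ ℂ` there is an injective sequence of integers
`(n_k)` such that the iterates `f^{n_k}(z)` converge in `ℂ`.  (If `|a| < 1` the forward
iterates converge to `b/(1−a)`; if `|a| > 1` the backward iterates do; if `|a| = 1`, `a ≠ 1`,
the whole orbit is bounded and hence has a convergent subsequence along distinct indices.)
In particular the cyclic group generated by `f` does not act properly discontinuously on `ℂ`. -/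
theorem affine_nontranslation_orbit_accumulates
    (a b : ℂ) (ha0 : a ≠ 0) (ha1 : a ≠ 1)
    (f : Equiv.Perm ℂ) (hf : ∀ z : ℂ, f z = a * z + b)
    (hfinv : ∀ z : ℂ, f.symm z = z / a - b / a) :
    ∀ z : ℂ, ∃ (φ : ℕ → ℤ), Function.Injective φ ∧
      ∃ w : ℂ, Tendsto (fun k => (f ^ (φ k) : Equiv.Perm ℂ) z) atTop (𝓝 w) := by
  have h1a : (1 : ℂ) - a ≠ 0 := sub_ne_zero.mpr (Ne.symm ha1)
  set c : ℂ := b / (1 - a) with hc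
  have key : ∀ n : ℤ, ∀ z : ℂ, (f ^ n : Equiv.Perm ℂ) z = c + a ^ n * (z - c) := by
    intro n
    induction n using Int.induction_on with
    | zero => intro z; simp
    | succ n ih =>
      intro z
      have h1 : (f ^ ((n : ℤ) + 1) : Equiv.Perm ℂ) z = (f ^ (n : ℤ) : Equiv.Perm ℂ) (f z) := by
        rw [zpow_add_one]; rfl
      rw [h1, hf, ih]
      have h2 : a * z + b - c = a * (z - c) := by
        rw [hc]; field_simp; ring
      rw [h2, zpow_add_one₀ ha0]; ring
    | pred n ih =>
      intro z
      have h1 : (f ^ (-(n : ℤ) - 1) : Equiv.Perm ℂ) z = (f ^ (-(n : ℤ)) : Equiv.Perm ℂ) (f.symm z) := by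
        rw [zpow_sub_one]; rfl
      rw [h1, hfinv, ih]
      have h2 : z / a - b / a - c = a⁻¹ * (z - c) := by
        rw [hc]; field_simp; ring
      rw [h2, zpow_sub_one₀ ha0]; ring
  intro z
  rcases lt_trichotomy ‖a‖ 1 with hlt | heq | hgt
  · refine ⟨fun k => (k : ℤ), fun m n h => by simpa using h, c, ?_⟩
    have : Tendsto (fun k : ℕ => c + a ^ k * (z - c)) atTop (𝓝 (c + 0 * (z - c))) := by
      exact (tendsto_const_nhds.add
        ((tendsto_pow_atTop_nhds_zero_of_norm_lt_one hlt).mul_const _))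
    simp only [zero_mul, add_zero] at this
    have hfun : (fun k : ℕ => (f ^ ((k : ℤ)) : Equiv.Perm ℂ) z) = fun k : ℕ => c + a ^ k * (z - c) :=
      funext fun k => by rw [key, zpow_natCast]
    rw [hfun]; exact this
  · -- |a| = 1 : orbit is bounded
    have hbound : ∀ n : ℕ, (f ^ (n : ℤ) : Equiv.Perm ℂ) z ∈
        Metric.closedBall (0 : ℂ) (‖c‖ + ‖z - c‖) := by
      intro n
      simp only [Metric.mem_closedBall, dist_zero_right, key]
      calc ‖c + a ^ (n : ℤ) * (z - c)‖ ≤ ‖c‖ + ‖a ^ (n : ℤ) * (z - c)‖ := norm_add_le _ _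
        _ = ‖c‖ + ‖z - c‖ := by
            rw [norm_mul, norm_zpow]
            simp [heq]
    obtain ⟨w, -, ψ, hψ, hw⟩ := tendsto_subseq_of_bounded
      Metric.isBounded_closedBall hbound
    refine ⟨fun k => ((ψ k : ℕ) : ℤ), fun m n h => hψ.injective (by simpa using h), w, hw⟩
  · refine ⟨fun k => -(k : ℤ), fun m n h => by simpa using h, c, ?_⟩
    have hinv : ‖a⁻¹‖ < 1 := by
      rw [norm_inv]
      rw [inv_lt_one_iff₀]
      right
      exact_mod_cast hgt
    have : Tendsto (fun k : ℕ => c + (a⁻¹) ^ k * (z - c)) atTop (𝓝 (c + 0 * (z - c))) :=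
      tendsto_const_nhds.add ((tendsto_pow_atTop_nhds_zero_of_norm_lt_one hinv).mul_const _)
    simp only [zero_mul, add_zero] at this
    have heqfun : ∀ k : ℕ, (f ^ (-(k : ℤ)) : Equiv.Perm ℂ) z = c + (a⁻¹) ^ k * (z - c) := by
      intro k
      rw [key, zpow_neg, zpow_natCast, inv_pow]
    simpa only [heqfun] using this
end
end

section
/- Let X : ℝ² → ℝ³ be a C³ map giving an isothermal parameterization, i.e. satisfying |∂_{α₁}X(α)|² = |∂_{α₂}X(α)|² and ∂_{α₁}X(α) · ∂_{α₂}X(α) = 0 for all α ∈ ℝ². Then (1/2) Δ(|∂_{α₁}X|²) = |∂_{α₁}∂_{α₂}X|² − ∂_{α₁}²X · ∂_{α₂}²X pointwise on ℝ², where Δ = ∂_{α₁}² + ∂_{α₂}² is the Laplacian on ℝ² applied to the scalar function |∂_{α₁}X|², and · denotes the Euclidean inner product in ℝ³. -/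
open scoped ENNReal RealInnerProductSpace

noncomputable section

/-- The `i`-th standard basis vector of `ℝ²`. -/
def e2 (i : Fin 2) : EuclideanSpace ℝ (Fin 2) := EuclideanSpace.single i (1 : ℝ)

/-- Partial derivative `∂_{α_i} X (α)` of a map `X : ℝ² → ℝ³`. -/
def pdX (X : EuclideanSpace ℝ (Fin 2) → EuclideanSpace ℝ (Fin 3)) (i : Fin 2)
    (α : EuclideanSpace ℝ (Fin 2)) : EuclideanSpace ℝ (Fin 3) :=
  fderiv ℝ X α (e2 i)

/-- Second partial derivative `∂_{α_i}∂_{α_j} X (α)`. -/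
def pdX2 (X : EuclideanSpace ℝ (Fin 2) → EuclideanSpace ℝ (Fin 3)) (i j : Fin 2)
    (α : EuclideanSpace ℝ (Fin 2)) : EuclideanSpace ℝ (Fin 3) :=
  fderiv ℝ (fun a => fderiv ℝ X a (e2 j)) α (e2 i)

/-- Laplacian `Δg = ∂_{α₁}² g + ∂_{α₂}² g` of a scalar function on `ℝ²`. -/
def lap2 (g : EuclideanSpace ℝ (Fin 2) → ℝ) (α : EuclideanSpace ℝ (Fin 2)) : ℝ :=
  ∑ i, fderiv ℝ (fun a => fderiv ℝ g a (e2 i)) α (e2 i)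

local notation "E2" => EuclideanSpace ℝ (Fin 2)
local notation "E3" => EuclideanSpace ℝ (Fin 3)

/-- Derivative of a CLM-valued function applied to a constant vector. -/
lemma fderiv_apply_const {f : E2 → (EuclideanSpace ℝ (Fin 2) →L[ℝ] EuclideanSpace ℝ (Fin 3))}
    {x : E2} (hf : DifferentiableAt ℝ f x) (v w : E2) :
    fderiv ℝ (fun a => f a v) x w = fderiv ℝ f x w v := by
  have h := (hf.hasFDerivAt.clm_apply (hasFDerivAt_const v x)).fderiv
  rw [h]
  simp

/-- For a `C³` isothermal parameterization `X : ℝ² → ℝ³`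
(`|∂_{α₁}X|² = |∂_{α₂}X|²` and `∂_{α₁}X · ∂_{α₂}X = 0` everywhere), one has
`(1/2) Δ(|∂_{α₁}X|²) = |∂_{α₁}∂_{α₂}X|² − ∂_{α₁}²X · ∂_{α₂}²X` pointwise on `ℝ²`. -/
theorem isothermal_laplacian_identity
    (X : EuclideanSpace ℝ (Fin 2) → EuclideanSpace ℝ (Fin 3))
    (hX : ContDiff ℝ 3 X)
    (iso1 : ∀ α, ‖pdX X 0 α‖ ^ 2 = ‖pdX X 1 α‖ ^ 2)
    (iso2 : ∀ α, ⟪pdX X 0 α, pdX X 1 α⟫ = 0) :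
    ∀ α, (1 / 2 : ℝ) * lap2 (fun a => ‖pdX X 0 a‖ ^ 2) α
      = ‖pdX2 X 0 1 α‖ ^ 2 - ⟪pdX2 X 0 0 α, pdX2 X 1 1 α⟫ := by
  intro α
  -- the first, second and third partial derivative functions
  set Y : Fin 2 → E2 → E3 := fun i a => fderiv ℝ X a (e2 i) with hYdef
  set Z : Fin 2 → Fin 2 → E2 → E3 := fun i j a => fderiv ℝ (Y j) a (e2 i) with hZdef
  set W : Fin 2 → Fin 2 → Fin 2 → E2 → E3 := fun i j k a => fderiv ℝ (Z j k) a (e2 i)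
    with hWdef
  -- smoothness
  have hX' : ContDiff ℝ 2 (fderiv ℝ X) := hX.fderiv_right (by norm_num)
  have hY : ∀ i, ContDiff ℝ 2 (Y i) := fun i =>
    (ContinuousLinearMap.apply ℝ E3 (e2 i)).contDiff.comp hX'
  have hYd : ∀ i, Differentiable ℝ (Y i) := fun i => (hY i).differentiable (by norm_num)
  have hY' : ∀ j, ContDiff ℝ 1 (fderiv ℝ (Y j)) := fun j => (hY j).fderiv_right (by norm_num)
  have hZ : ∀ i j, Differentiable ℝ (Z i j) := fun i j =>
    (((ContinuousLinearMap.apply ℝ E3 (e2 i)).contDiff.comp (hY' j)).differentiable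
      (by norm_num))
  -- unfolding equations
  have zapp : ∀ (i j : Fin 2) (a : E2), fderiv ℝ (Y j) a (e2 i) = Z i j a := fun _ _ _ => rfl
  have wapp : ∀ (i j k : Fin 2) (a : E2), fderiv ℝ (Z j k) a (e2 i) = W i j k a :=
    fun _ _ _ _ => rfl
  -- second derivative symmetry of X : Z i j = Z j i
  have hZeq : ∀ (i j : Fin 2) (a : E2), Z i j a = fderiv ℝ (fderiv ℝ X) a (e2 i) (e2 j) := by
    intro i j a
    exact fderiv_apply_const (hX'.differentiable (by norm_num) a) (e2 j) (e2 i)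
  have symZ : ∀ (i j : Fin 2) (a : E2), Z i j a = Z j i a := by
    intro i j a
    rw [hZeq, hZeq]
    exact (hX.contDiffAt.isSymmSndFDerivAt (by norm_num)) (e2 i) (e2 j)
  have hWeq : ∀ (i j k : Fin 2) (a : E2),
      W i j k a = fderiv ℝ (fderiv ℝ (Y k)) a (e2 i) (e2 j) := by
    intro i j k a
    exact fderiv_apply_const ((hY' k).differentiable (by norm_num) a) (e2 j) (e2 i)
  -- third derivative symmetry in the first two indices
  have symW1 : ∀ (i j k : Fin 2) (a : E2), W i j k a = W j i k a := by
    intro i j k a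
    rw [hWeq, hWeq]
    exact ((hY k).contDiffAt.isSymmSndFDerivAt (by norm_num)) (e2 i) (e2 j)
  -- third derivative symmetry in the last two indices
  have symW2 : ∀ (i j k : Fin 2) (a : E2), W i j k a = W i k j a := by
    intro i j k a
    have h : Z j k = Z k j := funext (symZ j k)
    simp only [hWdef, h]
  -- derivative of an inner product
  have dinner : ∀ (f g : E2 → E3), Differentiable ℝ f → Differentiable ℝ g →
      ∀ (a : E2) (i : Fin 2), fderiv ℝ (fun b => ⟪f b, g b⟫) a (e2 i)
        = ⟪f a, fderiv ℝ g a (e2 i)⟫ + ⟪fderiv ℝ f a (e2 i), g a⟫ := by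
    intro f g hf hg a i
    exact fderiv_inner_apply ℝ (hf a) (hg a) (e2 i)
  -- first derivative of |Y₀|² = |Y₁|²
  have E1 : ∀ (i : Fin 2) (a : E2), ⟪Z i 0 a, Y 0 a⟫ = ⟪Z i 1 a, Y 1 a⟫ := by
    intro i a
    have hfun : (fun b => ⟪Y 0 b, Y 0 b⟫) = (fun b => ⟪Y 1 b, Y 1 b⟫) := by
      funext b
      rw [real_inner_self_eq_norm_sq, real_inner_self_eq_norm_sq]
      exact iso1 b
    have h0 := dinner (Y 0) (Y 0) (hYd 0) (hYd 0) a i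
    have h1 := dinner (Y 1) (Y 1) (hYd 1) (hYd 1) a i
    rw [hfun, h1] at h0
    simp only [zapp] at h0
    linarith [real_inner_comm (Z i 0 a) (Y 0 a), real_inner_comm (Z i 1 a) (Y 1 a)]
  -- first derivative of ⟪Y₀, Y₁⟫ = 0
  have E2i : ∀ (i : Fin 2) (a : E2), ⟪Z i 0 a, Y 1 a⟫ = -⟪Y 0 a, Z i 1 a⟫ := by
    intro i a
    have hfun : (fun b => ⟪Y 0 b, Y 1 b⟫) = (fun _ : E2 => (0 : ℝ)) :=
      funext fun b => iso2 b
    have h0 := dinner (Y 0) (Y 1) (hYd 0) (hYd 1) a i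
    rw [hfun] at h0
    simp only [fderiv_fun_const, Pi.zero_apply, ContinuousLinearMap.zero_apply, zapp] at h0
    linarith
  -- second derivative identities
  have F1 : ⟪Z 0 0 α, Z 0 0 α⟫ + ⟪W 0 0 0 α, Y 0 α⟫
      = ⟪Z 0 1 α, Z 0 1 α⟫ + ⟪W 0 0 1 α, Y 1 α⟫ := by
    have hfun : (fun b => ⟪Z 0 0 b, Y 0 b⟫) = (fun b => ⟪Z 0 1 b, Y 1 b⟫) :=
      funext (E1 0)
    have h0 := dinner (Z 0 0) (Y 0) (hZ 0 0) (hYd 0) α 0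
    have h1 := dinner (Z 0 1) (Y 1) (hZ 0 1) (hYd 1) α 0
    rw [hfun, h1] at h0
    simp only [zapp, wapp] at h0
    linarith [real_inner_comm (Y 0 α) (W 0 0 0 α), real_inner_comm (Y 1 α) (W 0 0 1 α)]
  have F2 : ⟪Z 0 0 α, Z 1 1 α⟫ + ⟪W 1 0 0 α, Y 1 α⟫
      = -⟪Y 0 α, W 1 0 1 α⟫ - ⟪Z 1 0 α, Z 0 1 α⟫ := by
    have hfun : (fun b => ⟪Z 0 0 b, Y 1 b⟫) = (fun b => -⟪Y 0 b, Z 0 1 b⟫) :=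
      funext fun b => E2i 0 b
    have h0 := dinner (Z 0 0) (Y 1) (hZ 0 0) (hYd 1) α 1
    have h1 : fderiv ℝ (fun b => -⟪Y 0 b, Z 0 1 b⟫) α (e2 1)
        = -(⟪Y 0 α, W 1 0 1 α⟫ + ⟪Z 1 0 α, Z 0 1 α⟫) := by
      have h2 := dinner (Y 0) (Z 0 1) (hYd 0) (hZ 0 1) α 1
      rw [fderiv_fun_neg]
      simp only [ContinuousLinearMap.neg_apply]
      rw [h2]
    rw [hfun, h1] at h0
    simp only [zapp, wapp] at h0
    linarith
  -- compute the Laplacian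
  have gfun : (fun a => ‖pdX X 0 a‖ ^ 2) = (fun a => ⟪Y 0 a, Y 0 a⟫) :=
    funext fun a => (real_inner_self_eq_norm_sq (Y 0 a)).symm
  have dg : ∀ (i : Fin 2), (fun a => fderiv ℝ (fun b => ⟪Y 0 b, Y 0 b⟫) a (e2 i))
      = (fun a => ⟪Y 0 a, Z i 0 a⟫ + ⟪Z i 0 a, Y 0 a⟫) := by
    intro i
    funext a
    rw [dinner (Y 0) (Y 0) (hYd 0) (hYd 0) a i]
  have d2g : ∀ (i : Fin 2),
      fderiv ℝ (fun a => fderiv ℝ (fun b => ⟪Y 0 b, Y 0 b⟫) a (e2 i)) α (e2 i)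
      = ⟪Y 0 α, W i i 0 α⟫ + ⟪Z i 0 α, Z i 0 α⟫
        + (⟪Z i 0 α, Z i 0 α⟫ + ⟪W i i 0 α, Y 0 α⟫) := by
    intro i
    rw [dg i]
    have hf1 : DifferentiableAt ℝ (fun a => ⟪Y 0 a, Z i 0 a⟫) α :=
      (hYd 0 α).inner ℝ (hZ i 0 α)
    have hf2 : DifferentiableAt ℝ (fun a => ⟪Z i 0 a, Y 0 a⟫) α :=
      (hZ i 0 α).inner ℝ (hYd 0 α)
    rw [fderiv_fun_add hf1 hf2]
    simp only [ContinuousLinearMap.add_apply]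
    rw [dinner (Y 0) (Z i 0) (hYd 0) (hZ i 0) α i,
        dinner (Z i 0) (Y 0) (hZ i 0) (hYd 0) α i]
  have hlap : lap2 (fun a => ‖pdX X 0 a‖ ^ 2) α
      = ⟪Y 0 α, W 0 0 0 α⟫ + ⟪Z 0 0 α, Z 0 0 α⟫
        + (⟪Z 0 0 α, Z 0 0 α⟫ + ⟪W 0 0 0 α, Y 0 α⟫)
        + (⟪Y 0 α, W 1 1 0 α⟫ + ⟪Z 1 0 α, Z 1 0 α⟫
        + (⟪Z 1 0 α, Z 1 0 α⟫ + ⟪W 1 1 0 α, Y 0 α⟫)) := by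
    rw [lap2, gfun, Fin.sum_univ_two, d2g 0, d2g 1]
  -- assemble everything
  have goalRHS1 : ‖pdX2 X 0 1 α‖ ^ 2 = ⟪Z 0 1 α, Z 0 1 α⟫ :=
    (real_inner_self_eq_norm_sq (Z 0 1 α)).symm
  have goalRHS2 : ⟪pdX2 X 0 0 α, pdX2 X 1 1 α⟫ = ⟪Z 0 0 α, Z 1 1 α⟫ := rfl
  rw [hlap, goalRHS1, goalRHS2]
  -- symmetry rewrites
  have s1 : ⟪W 0 0 1 α, Y 1 α⟫ = ⟪W 1 0 0 α, Y 1 α⟫ := by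
    rw [symW2 0 0 1 α, symW1 0 1 0 α]
  have s2 : ⟪Y 0 α, W 1 1 0 α⟫ = ⟪Y 0 α, W 1 0 1 α⟫ := by
    rw [symW2 1 1 0 α]
  have s3 : ⟪W 1 1 0 α, Y 0 α⟫ = ⟪Y 0 α, W 1 1 0 α⟫ := real_inner_comm _ _
  have s4 : ⟪Y 0 α, W 0 0 0 α⟫ = ⟪W 0 0 0 α, Y 0 α⟫ := real_inner_comm _ _
  have s5 : ⟪Z 1 0 α, Z 1 0 α⟫ = ⟪Z 1 0 α, Z 0 1 α⟫ := by
    rw [symZ 1 0 α]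
  have s6 : ⟪Z 1 0 α, Z 0 1 α⟫ = ⟪Z 0 1 α, Z 0 1 α⟫ := by
    rw [symZ 1 0 α]
  linarith [F1, F2, s1, s2, s3, s4, s5, s6]
end
end
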